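/- The spectral radius of the complete graph K_n with one edge removed equals (n - 3 + sqrt(n² + 2n - 7))/2. -/
import Mathlib

set_option maxHeartbeats 1000000


/-- The spectral radius (largest adjacency eigenvalue) of a graph. -/
noncomputable def graphMu {n : ℕ} (G : SimpleGraph (Fin n)) [DecidableRel G.Adj] : ℝ :=
  sSup {x : ℝ | Module.End.HasEigenvalue (Matrix.toLin' (G.adjMatrix ℝ)) x}

theorem complete_minus_edge_mu {n : ℕ} (hn : 2 ≤ n) (G : SimpleGraph (Fin n))
    [DecidableRel G.Adj] (a b : Fin n) (hab : a ≠ b)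
    (hG : ∀ u v : Fin n, G.Adj u v ↔ (u ≠ v ∧ s(u, v) ≠ s(a, b))) :
    graphMu G = ((n : ℝ) - 3 + Real.sqrt ((n : ℝ) ^ 2 + 2 * n - 7)) / 2 := by
  classical
  have hn2 : (2:ℝ) ≤ (n:ℝ) := by exact_mod_cast hn
  set D : ℝ := (n : ℝ) ^ 2 + 2 * n - 7 with hDdef
  set μ : ℝ := ((n : ℝ) - 3 + Real.sqrt D) / 2 with hμdef
  have hD0 : 0 ≤ D := by nlinarith
  have hsq : Real.sqrt D ^ 2 = D := Real.sq_sqrt hD0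
  have hs0 : 0 ≤ Real.sqrt D := Real.sqrt_nonneg D
  have habs : |(n:ℝ) - 3| ≤ Real.sqrt D := by
    rw [← Real.sqrt_sq_eq_abs]
    apply Real.sqrt_le_sqrt; nlinarith
  have hμ3 : (n:ℝ) - 3 ≤ μ := by
    have := le_abs_self ((n:ℝ) - 3)
    rw [hμdef]; linarith
  have hμ0 : 0 ≤ μ := by
    have := neg_abs_le ((n:ℝ) - 3)
    rw [hμdef]; linarith
  have hμsq : μ ^ 2 = ((n:ℝ) - 3) * μ + 2 * ((n:ℝ) - 2) := by
    rw [hμdef]; field_simp; nlinarith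
  set A := G.adjMatrix ℝ with hAdef
  -- entrywise formula
  have hAx : ∀ u w : Fin n, ∀ x : ℝ, A u w * x =
      x - (if u = w then x else 0) - (if u = a ∧ w = b then x else 0)
        - (if u = b ∧ w = a then x else 0) := by
    intro u w x
    have hadj : A u w = if G.Adj u w then 1 else 0 := by
      rw [hAdef]; exact SimpleGraph.adjMatrix_apply G u w
    have key : G.Adj u w ↔ (¬u = w ∧ ¬(u = a ∧ w = b) ∧ ¬(u = b ∧ w = a)) := by
      rw [hG u w, ne_eq, ne_eq, Sym2.eq_iff]; tauto
    rw [hadj]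
    by_cases h1 : u = w <;> by_cases h2 : u = a ∧ w = b <;> by_cases h3 : u = b ∧ w = a
    · exact absurd ((h2.1.symm.trans h1).trans h2.2) hab
    · exact absurd ((h2.1.symm.trans h1).trans h2.2) hab
    · exact absurd (((h3.1.symm.trans h1).trans h3.2).symm) hab
    · subst h1; simp [key, h2, h3]
    · exact absurd (h2.1.symm.trans h3.1) hab
    · obtain ⟨rfl, rfl⟩ := h2; simp [key, hab, Ne.symm hab]
    · obtain ⟨rfl, rfl⟩ := h3; simp [key, hab, Ne.symm hab]
    · simp [key, h1, h2, h3]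
  -- quadratic form
  have hquad : ∀ v : Fin n → ℝ, ∑ u, (A.mulVec v) u * v u =
      (∑ i, v i) * (∑ i, v i) - (∑ i, v i * v i) - 2 * (v a * v b) := by
    intro v
    have hrw : ∀ u, (A.mulVec v) u * v u = ∑ w, A u w * (v w * v u) := by
      intro u
      simp only [Matrix.mulVec, dotProduct, Finset.sum_mul, mul_assoc]
    simp only [hrw, hAx, Finset.sum_sub_distrib]
    have t1 : (∑ u : Fin n, ∑ w : Fin n, v w * v u) = (∑ i, v i) * (∑ i, v i) := by
      simp_rw [← Finset.sum_mul, ← Finset.mul_sum]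
    have t2 : (∑ u : Fin n, ∑ w : Fin n, if u = w then v w * v u else 0)
        = ∑ i, v i * v i := by
      simp [Finset.sum_ite_eq]
    have t3 : (∑ u : Fin n, ∑ w : Fin n, if u = a ∧ w = b then v w * v u else 0)
        = v b * v a := by
      have e : ∀ u w : Fin n, (if u = a ∧ w = b then v w * v u else 0)
          = (if w = b then (if u = a then v w * v u else 0) else 0) := by
        intro u w; by_cases h : w = b <;> by_cases h' : u = a <;> simp [h, h']
      simp_rw [e, Finset.sum_ite_eq', Finset.mem_univ, if_true]
      simp [Finset.sum_ite_eq']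
    have t4 : (∑ u : Fin n, ∑ w : Fin n, if u = b ∧ w = a then v w * v u else 0)
        = v a * v b := by
      have e : ∀ u w : Fin n, (if u = b ∧ w = a then v w * v u else 0)
          = (if w = a then (if u = b then v w * v u else 0) else 0) := by
        intro u w; by_cases h : w = a <;> by_cases h' : u = b <;> simp [h, h']
      simp_rw [e, Finset.sum_ite_eq', Finset.mem_univ, if_true]
      simp [Finset.sum_ite_eq']
    rw [t1, t2, t3, t4]; ring
  -- upper bound
  have hub : ∀ x ∈ {x : ℝ | Module.End.HasEigenvalue (Matrix.toLin' A) x}, x ≤ μ := by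
    intro x hx
    obtain ⟨v, hv⟩ := Module.End.HasEigenvalue.exists_hasEigenvector hx
    have hveq : A.mulVec v = x • v := by
      have := hv.apply_eq_smul
      rwa [Matrix.toLin'_apply] at this
    have hv0 := hv.right
    set q : ℝ := ∑ i, v i * v i with hqdef
    have hq0 : 0 < q := by
      obtain ⟨i, hi⟩ := Function.ne_iff.mp hv0
      have h1 : (0:ℝ) < v i * v i := mul_self_pos.mpr hi
      have h2 : ∀ j ∈ Finset.univ, (0:ℝ) ≤ v j * v j := fun j _ => mul_self_nonneg _
      calc (0:ℝ) < v i * v i := h1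
        _ ≤ q := Finset.single_le_sum h2 (Finset.mem_univ i)
    have hform := hquad v
    rw [hveq] at hform
    simp only [Pi.smul_apply, smul_eq_mul] at hform
    rw [show (∑ u, x * v u * v u) = x * q from by
      rw [hqdef, Finset.mul_sum]; exact Finset.sum_congr rfl fun i _ => by ring] at hform
    -- split sums over {a, b}
    have hsub : ({a, b} : Finset (Fin n)) ⊆ Finset.univ := Finset.subset_univ _
    set c : ℝ := ∑ i ∈ Finset.univ \ {a, b}, v i with hcdef
    set q' : ℝ := ∑ i ∈ Finset.univ \ {a, b}, v i * v i with hq'def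
    have hs : (∑ i, v i) = c + (v a + v b) := by
      rw [hcdef, ← Finset.sum_pair hab, Finset.sum_sdiff hsub]
    have hqsplit : q = q' + (v a * v a + v b * v b) := by
      rw [hqdef, hq'def, ← Finset.sum_pair (f := fun i => v i * v i) hab,
        Finset.sum_sdiff hsub]
    have hq'0 : 0 ≤ q' := Finset.sum_nonneg fun i _ => mul_self_nonneg _
    have hcard : ((Finset.univ \ ({a, b} : Finset (Fin n))).card : ℝ) = (n : ℝ) - 2 := by
      rw [Finset.card_sdiff_of_subset hsub, Finset.card_pair hab, Finset.card_univ, Fintype.card_fin,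
        Nat.cast_sub hn]
      norm_num
    have hC : c ^ 2 ≤ ((n:ℝ) - 2) * q' := by
      have h := sq_sum_le_card_mul_sum_sq
        (s := Finset.univ \ ({a, b} : Finset (Fin n))) (f := v)
      rw [hcard] at h
      calc c ^ 2 ≤ ((n:ℝ) - 2) * ∑ i ∈ Finset.univ \ {a, b}, v i ^ 2 := h
        _ = ((n:ℝ) - 2) * q' := by
            rw [hq'def]; congr 1; exact Finset.sum_congr rfl fun i _ => by ring
    rcases eq_or_lt_of_le hn2 with h2 | h3
    · -- n = 2 : the complement of {a,b} is empty
      have hemp : Finset.univ \ ({a, b} : Finset (Fin n)) = ∅ := by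
        rw [← Finset.card_eq_zero]
        have : ((Finset.univ \ ({a, b} : Finset (Fin n))).card : ℝ) = 0 := by
          rw [hcard, ← h2]; ring
        exact_mod_cast this
      have hc0 : c = 0 := by rw [hcdef, hemp, Finset.sum_empty]
      have hq'00 : q' = 0 := by rw [hq'def, hemp, Finset.sum_empty]
      have hxq : x * q = 0 := by
        rw [hform, hs, ← hqdef, hqsplit, hc0, hq'00]; ring
      have hx0 : x = 0 := by
        rcases mul_eq_zero.mp hxq with h | h
        · exact h
        · exact absurd h (ne_of_gt hq0)
      linarith
    · -- n ≥ 3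
      have hn3 : (3:ℝ) ≤ (n:ℝ) := by
        have h' : (3:ℕ) ≤ n := by exact_mod_cast h3
        exact_mod_cast h'
      have hμpos : 0 < μ := by nlinarith
      have h5 : (μ + 2) * c ^ 2 ≤ (μ + 2) * (((n:ℝ) - 2) * q') :=
        mul_le_mul_of_nonneg_left hC (by linarith)
      have hineq : x * q ≤ μ * q := by
        rw [hform, hs, ← hqdef, hqsplit]
        nlinarith [sq_nonneg (μ * (v a + v b) - 2 * c), sq_nonneg (v a - v b),
          mul_nonneg hμpos.le (sq_nonneg (v a - v b)), mul_nonneg hμpos.le hq'0, h5]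
      exact le_of_mul_le_mul_right (by linarith) hq0
  -- lower bound : μ is an eigenvalue
  have hmem : Module.End.HasEigenvalue (Matrix.toLin' A) μ := by
    rcases eq_or_lt_of_le hn2 with h2 | h3
    · -- n = 2 : adjacency matrix is zero, μ = 0
      have hcd : Fintype.card (Fin n) = 2 := by
        rw [Fintype.card_fin]; exact_mod_cast h2.symm
      have hor : ∀ x : Fin n, x = a ∨ x = b := by
        intro x
        by_contra hx
        push_neg at hx
        have hcardle : ({x, a, b} : Finset (Fin n)).card ≤ 2 := by
          calc ({x, a, b} : Finset (Fin n)).card ≤ Finset.univ.card := Finset.card_le_univ _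
            _ = 2 := by rw [Finset.card_univ, hcd]
        have hcard3 : ({x, a, b} : Finset (Fin n)).card = 3 := by
          rw [Finset.card_insert_of_notMem (by simp [hx.1, hx.2]),
            Finset.card_pair hab]
        omega
      have hμ02 : μ = 0 := by
        rw [hμdef, hDdef]
        rw [show ((n:ℝ)^2 + 2*(n:ℝ) - 7 : ℝ) = 1 by rw [← h2]; ring]
        rw [Real.sqrt_one, ← h2]; ring
      have hA0 : ∀ w : Fin n, A.mulVec (fun _ => (1:ℝ)) w = 0 := by
        intro w
        simp only [Matrix.mulVec, dotProduct]
        have hz : ∀ u : Fin n, A w u = 0 := by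
          intro u
          rcases eq_or_ne w u with rfl | h1
          · simp [hAdef]
          · have : ¬ G.Adj w u := by
              rw [hG]
              simp only [not_and, not_not]
              intro _
              rw [Sym2.eq_iff]
              rcases hor w with rfl | rfl <;> rcases hor u with rfl | rfl <;> tauto
            simp [hAdef, this]
        simp [hz]
      apply Module.End.hasEigenvalue_of_hasEigenvector (x := fun _ => (1:ℝ))
      constructor
      · rw [Module.End.mem_eigenspace_iff, Matrix.toLin'_apply]
        funext w
        simp [hA0 w, hμ02]
      · intro h
        have := congrFun h a
        simp at this
    · -- n ≥ 3
      have hn3 : (3:ℝ) ≤ (n:ℝ) := by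
        have h' : (3:ℕ) ≤ n := by exact_mod_cast h3
        exact_mod_cast h'
      set v : Fin n → ℝ := fun i => if i = a ∨ i = b then (n:ℝ) - 2 else μ with hvdef
      have hv : ∀ w, v w = μ + (if w = a then ((n:ℝ) - 2) - μ else 0)
          + (if w = b then ((n:ℝ) - 2) - μ else 0) := by
        intro w
        by_cases h1 : w = a
        · subst h1
          simp [hvdef, hab]
        · by_cases h2 : w = b
          · subst h2
            simp [hvdef, h1, Ne.symm hab]
            try ring
          · simp [hvdef, h1, h2]
      have hS : ∑ w, v w = ((n:ℝ) - 2) * μ + 2 * ((n:ℝ) - 2) := by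
        simp only [hv]
        rw [Finset.sum_add_distrib, Finset.sum_add_distrib]
        simp only [Finset.sum_ite_eq', Finset.mem_univ, if_true, Finset.sum_const,
          Finset.card_univ, Fintype.card_fin, nsmul_eq_mul]
        ring
      have hmv : A.mulVec v = μ • v := by
        funext i
        have hmvi : A.mulVec v i = ∑ w, A i w * v w := by
          simp [Matrix.mulVec, dotProduct]
        rw [hmvi]
        simp only [hAx, Finset.sum_sub_distrib, Finset.sum_ite_eq, Finset.mem_univ, if_true]
        rw [hS]
        have e1 : (∑ w : Fin n, if i = a ∧ w = b then v w else 0)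
            = if i = a then v b else 0 := by
          by_cases h : i = a <;> simp [h, Finset.sum_ite_eq']
        have e2 : (∑ w : Fin n, if i = b ∧ w = a then v w else 0)
            = if i = b then v a else 0 := by
          by_cases h : i = b <;> simp [h, Finset.sum_ite_eq']
        rw [e1, e2]
        by_cases h1 : i = a
        · subst h1
          simp only [hvdef, Pi.smul_apply, smul_eq_mul]
          simp [hab, Ne.symm hab]
          try ring
        · by_cases h2 : i = b
          · subst h2
            simp only [hvdef, Pi.smul_apply, smul_eq_mul]
            simp [h1]
            ring
          · simp only [hvdef, Pi.smul_apply, smul_eq_mul]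
            simp [h1, h2]
            nlinarith [hμsq]
      apply Module.End.hasEigenvalue_of_hasEigenvector (x := v)
      constructor
      · rw [Module.End.mem_eigenspace_iff, Matrix.toLin'_apply, hmv]
      · intro h
        have hva := congrFun h a
        simp [hvdef] at hva
        linarith
  -- conclude
  unfold graphMu
  exact IsGreatest.csSup_eq ⟨hmem, hub⟩
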